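/- Let H be a complex Hilbert space and let E, F be effects on H. If the Jordan product E ∘ F = ½(EF + FE) is a positive operator, then |E − F| ≤ E + F, i.e., the generalized infimum satisfies E ⊓ F ≥ 0. -/

import Mathlib

variable {H : Type*} [NormedAddCommGroup H] [InnerProductSpace ℂ H] [CompleteSpace H]

/-- An effect on a complex Hilbert space: an operator `E` with `0 ≤ E ≤ 1` in the Loewner order. -/
def IsEffect (E : H →L[ℂ] H) : Prop := 0 ≤ E ∧ E ≤ 1


/-- The Jordan product E ∘ F = ½(EF + FE). -/
noncomputable def jordan (E F : H →L[ℂ] H) : H →L[ℂ] H := (2 : ℂ)⁻¹ • (E * F + F * E)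


/-- The absolute value |A| of a selfadjoint operator: the positive square root of A². -/
noncomputable def opAbs (A : H →L[ℂ] H) : H →L[ℂ] H := CFC.sqrt (A ^ 2)

/-- The generalized infimum E ⊓ F = ½(E + F - |E - F|). -/
noncomputable def ginf (E F : H →L[ℂ] H) : H →L[ℂ] H := (2 : ℂ)⁻¹ • (E + F - opAbs (E - F))

section Aux

open scoped NNReal ENNReal

variable {A : Type*} [CStarAlgebra A] [PartialOrder A] [StarOrderedRing A]

lemma mySpectralRadius_mul_le (a b : A) :
    spectralRadius ℂ (a * b) ≤ spectralRadius ℂ (b * a) := by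
  rw [spectralRadius, spectralRadius]
  refine iSup₂_le fun k hk => ?_
  rcases eq_or_ne k 0 with rfl | hne
  · simp
  · have hk' : k ∈ spectrum ℂ (a * b) \ {0} := ⟨hk, hne⟩
    rw [spectrum.nonzero_mul_comm] at hk'
    exact le_iSup₂ (f := fun k (_ : k ∈ spectrum ℂ (b * a)) => (‖k‖₊ : ℝ≥0∞)) k hk'.1

lemma mySqrt_le_sqrt_of_isUnit {a b : A} (ha : 0 ≤ a) (hb : 0 ≤ b) (hbu : IsUnit b)
    (hab : a ≤ b) : CFC.sqrt a ≤ CFC.sqrt b := by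
  rcases subsingleton_or_nontrivial A with hs | hn
  · exact le_of_eq (Subsingleton.elim _ _)
  have h1 : ‖CFC.sqrt a * b ^ (-(1 / 2) : ℝ)‖ ≤ 1 := (le_iff_norm_sqrt_mul_rpow a b ha (hbu.isStrictlyPositive hb)).mp hab
  lift b to Aˣ using hbu
  have hz := b.zero_notMem_spectrum ℝ≥0
  have hmul : CFC.sqrt (b : A) * (b : A) ^ (-(1 / 2) : ℝ) = 1 := by
    rw [CFC.sqrt_eq_rpow, ← CFC.rpow_add b.isUnit]
    norm_num
    exact CFC.rpow_zero _
  have hmul' : (b : A) ^ (-(1 / 2) : ℝ) * CFC.sqrt (b : A) = 1 := by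
    rw [CFC.sqrt_eq_rpow, ← CFC.rpow_add b.isUnit]
    norm_num
    exact CFC.rpow_zero _
  have hsu : IsUnit (CFC.sqrt (b : A)) :=
    ⟨⟨CFC.sqrt (b : A), (b : A) ^ (-(1 / 2) : ℝ), hmul, hmul'⟩, rfl⟩
  rw [le_iff_norm_sqrt_mul_rpow _ _ (CFC.sqrt_nonneg _) (hsu.isStrictlyPositive (CFC.sqrt_nonneg _))]
  have hrw : (CFC.sqrt (b : A)) ^ (-(1 / 2) : ℝ) = (b : A) ^ (-(1 / 4) : ℝ) := by
    rw [CFC.sqrt_eq_rpow, CFC.rpow_rpow (b : A) _ _ (by norm_num) (b.isUnit.isStrictlyPositive hb)]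
    norm_num
  rw [hrw]
  set p := CFC.sqrt (CFC.sqrt a) with hp
  set q := (b : A) ^ (-(1 / 4) : ℝ) with hq
  have hpnn : 0 ≤ p := CFC.sqrt_nonneg _
  have hqnn : 0 ≤ q := CFC.rpow_nonneg
  have hpp : p * p = CFC.sqrt a := CFC.sqrt_mul_sqrt_self _ (CFC.sqrt_nonneg _)
  have hqq : q * q = (b : A) ^ (-(1 / 2) : ℝ) := by
    rw [hq, ← CFC.rpow_add b.isUnit]; norm_num
  -- ‖p * q‖₊ ^ 2 = ‖star (p*q) * (p*q)‖₊
  have hstar : star (p * q) * (p * q) = q * (CFC.sqrt a * q) := by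
    rw [star_mul, (IsSelfAdjoint.of_nonneg hpnn).star_eq, (IsSelfAdjoint.of_nonneg hqnn).star_eq]
    rw [mul_assoc, ← mul_assoc p p q, hpp]
  have hsa : IsSelfAdjoint (star (p * q) * (p * q)) := IsSelfAdjoint.star_mul_self _
  have key : (‖star (p * q) * (p * q)‖₊ : ℝ≥0∞) ≤ 1 := by
    rw [← hsa.spectralRadius_eq_nnnorm, hstar]
    calc spectralRadius ℂ (q * (CFC.sqrt a * q))
        ≤ spectralRadius ℂ ((CFC.sqrt a * q) * q) := mySpectralRadius_mul_le _ _
      _ = spectralRadius ℂ (CFC.sqrt a * (b : A) ^ (-(1 / 2) : ℝ)) := by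
          rw [mul_assoc, hqq]
      _ ≤ ‖CFC.sqrt a * (b : A) ^ (-(1 / 2) : ℝ)‖₊ := spectrum.spectralRadius_le_nnnorm (𝕜 := ℂ) _
      _ ≤ 1 := by exact_mod_cast ENNReal.coe_le_one_iff.mpr (by exact_mod_cast h1)
  have key' : ‖star (p * q) * (p * q)‖₊ ≤ 1 := by exact_mod_cast key
  rw [CStarRing.nnnorm_star_mul_self] at key'
  rw [← sq_le_one_iff₀ (norm_nonneg (p * q)), sq]
  exact_mod_cast key'

lemma myAlgebraMap_nonneg (r : ℝ≥0) : (0 : A) ≤ algebraMap ℝ≥0 A r := by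
  have : algebraMap ℝ≥0 A r = star (algebraMap ℝ≥0 A (NNReal.sqrt r)) *
      algebraMap ℝ≥0 A (NNReal.sqrt r) := by
    have hsa : IsSelfAdjoint (algebraMap ℝ≥0 A (NNReal.sqrt r)) := by
      rw [Algebra.algebraMap_eq_smul_one]
      exact IsSelfAdjoint.smul (star_trivial _) (.one A)
    rw [hsa.star_eq, ← map_mul, NNReal.mul_self_sqrt]
  exact this ▸ star_mul_self_nonneg _

lemma mySqrt_le_sqrt {a b : A} (ha : 0 ≤ a) (hab : a ≤ b) : CFC.sqrt a ≤ CFC.sqrt b := by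
  have hb : 0 ≤ b := ha.trans hab
  have key : ∀ ε : ℝ≥0, 0 < ε →
      CFC.sqrt a ≤ CFC.sqrt b + algebraMap ℝ≥0 A (NNReal.sqrt ε) := by
    intro ε hε
    set bε := b + algebraMap ℝ≥0 A ε with hbε
    have hmapnn : (0 : A) ≤ algebraMap ℝ≥0 A ε := myAlgebraMap_nonneg ε
    have hbεnn : 0 ≤ bε := add_nonneg hb hmapnn
    have hunit : IsUnit bε := by
      refine CStarAlgebra.isUnit_of_le _ ?_ (((isUnit_iff_ne_zero.mpr hε.ne').map (algebraMap ℝ≥0 A))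
        |>.isStrictlyPositive hmapnn)
      exact le_add_of_nonneg_left hb
    have haε : a ≤ bε := hab.trans (le_add_of_nonneg_right hmapnn)
    refine (mySqrt_le_sqrt_of_isUnit ha hbεnn hunit haε).trans ?_
    -- now show sqrt (b + ε) ≤ sqrt b + sqrt ε
    have hcfc : bε = cfc (fun x : ℝ≥0 => x + ε) b := by
      rw [cfc_add_const ε _ b (by fun_prop), cfc_id' ℝ≥0 b]
    rw [hcfc, CFC.sqrt_eq_cfc, ← cfc_comp' NNReal.sqrt _ b (by fun_prop) (by fun_prop)]
    calc cfc (fun x : ℝ≥0 => NNReal.sqrt (x + ε)) b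
        ≤ cfc (fun x : ℝ≥0 => NNReal.sqrt x + NNReal.sqrt ε) b := by
          refine cfc_mono fun x _ => ?_
          rw [NNReal.sqrt_le_iff_le_sq, add_sq, NNReal.sq_sqrt, NNReal.sq_sqrt]
          exact (add_le_add_iff_right ε).mpr (le_add_of_nonneg_right zero_le)
      _ = CFC.sqrt b + algebraMap ℝ≥0 A (NNReal.sqrt ε) := by
          rw [cfc_add_const (NNReal.sqrt ε) _ b (by fun_prop), CFC.sqrt_eq_cfc]
  -- take the limit ε → 0⁺
  have hclosed : IsClosed {x : A | 0 ≤ x} := CStarAlgebra.isClosed_nonneg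
  have htend : Filter.Tendsto
      (fun ε : ℝ≥0 => CFC.sqrt b + algebraMap ℝ≥0 A (NNReal.sqrt ε) - CFC.sqrt a)
      (nhdsWithin 0 (Set.Ioi 0)) (nhds (CFC.sqrt b - CFC.sqrt a)) := by
    have : Filter.Tendsto (fun ε : ℝ≥0 => algebraMap ℝ≥0 A (NNReal.sqrt ε))
        (nhdsWithin 0 (Set.Ioi 0)) (nhds 0) := by
      have hc : Continuous (fun ε : ℝ≥0 => algebraMap ℝ≥0 A (NNReal.sqrt ε)) := by
        simp_rw [Algebra.algebraMap_eq_smul_one]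
        fun_prop
      simpa using (hc.tendsto 0).mono_left nhdsWithin_le_nhds
    simpa using ((tendsto_const_nhds (x := CFC.sqrt b)).add this).sub
      (tendsto_const_nhds (x := CFC.sqrt a))
  have hmem : ∀ᶠ ε in nhdsWithin (0 : ℝ≥0) (Set.Ioi 0),
      (CFC.sqrt b + algebraMap ℝ≥0 A (NNReal.sqrt ε) - CFC.sqrt a) ∈ {x : A | 0 ≤ x} := by
    filter_upwards [self_mem_nhdsWithin] with ε hε
    exact sub_nonneg.mpr (key ε hε)
  have := hclosed.mem_of_tendsto htend hmem
  exact sub_nonneg.mp this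

end Aux

/-- If the Jordan product of two effects is positive then |E - F| ≤ E + F, i.e. E ⊓ F ≥ 0. -/
theorem ginf_nonneg_of_jordan_nonneg (E F : H →L[ℂ] H) (hE : IsEffect E) (hF : IsEffect F)
    (h : 0 ≤ jordan E F) :
    opAbs (E - F) ≤ E + F ∧ 0 ≤ ginf E F := by
  have hEF : (0 : H →L[ℂ] H) ≤ E * F + F * E := by
    have h2 : E * F + F * E = jordan E F + jordan E F := by
      rw [jordan, ← add_smul]
      norm_num
    rw [h2]
    exact add_nonneg h h
  have hsq : (E - F) ^ 2 ≤ (E + F) ^ 2 := by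
    rw [← sub_nonneg]
    have hid : (E + F) ^ 2 - (E - F) ^ 2 = (E * F + F * E) + (E * F + F * E) := by
      noncomm_ring
    rw [hid]
    exact add_nonneg hEF hEF
  have hEFsa : IsSelfAdjoint (E - F) :=
    (IsSelfAdjoint.of_nonneg hE.1).sub (IsSelfAdjoint.of_nonneg hF.1)
  have hsqnn : (0 : H →L[ℂ] H) ≤ (E - F) ^ 2 := by
    rw [sq]
    nth_rewrite 1 [← hEFsa.star_eq]
    exact star_mul_self_nonneg _
  have h1 : opAbs (E - F) ≤ E + F := by
    have := mySqrt_le_sqrt hsqnn hsq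
    rwa [CFC.sqrt_sq (E + F) (add_nonneg hE.1 hF.1)] at this
  refine ⟨h1, ?_⟩
  have hX : (0 : H →L[ℂ] H) ≤ E + F - opAbs (E - F) := sub_nonneg.mpr h1
  set c : H →L[ℂ] H := ((Real.sqrt 2⁻¹ : ℝ) : ℂ) • 1 with hc
  have hgf : ginf E F = star c * (E + F - opAbs (E - F)) * c := by
    rw [ginf, hc]
    rw [star_smul, star_one, smul_mul_assoc, smul_mul_assoc, one_mul, mul_smul_comm, mul_one,
      smul_smul]
    congr 1
    rw [RCLike.star_def, Complex.conj_ofReal, ← Complex.ofReal_mul,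
      Real.mul_self_sqrt (by norm_num)]
    norm_num
  rw [hgf]
  exact star_left_conjugate_nonneg hX c
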